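/- Let H be a finitely generated group with trivial center, A a finitely generated abelian group, and φ the automorphism of H × A given by φ(h, a) = (ψ(h), α(h)·a⁻¹), where ψ is an automorphism of H, α : H → A is a homomorphism, and the A-component automorphism is the inversion a ↦ a⁻¹. Then Fix φ is finitely generated if and only if Fix ψ is finitely generated. -/

import Mathlib

/-- The subgroup of fixed points of an automorphism `φ` of `G`:
`Fix φ = {g ∈ G | φ(g) = g}`. -/
def fixedSubgroup {G : Type*} [Group G] (φ : G ≃* G) : Subgroup G where
  carrier := {g | φ g = g}
  one_mem' := map_one φ
  mul_mem' := by
    intro a b ha hb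
    simp only [Set.mem_setOf_eq, map_mul] at *
    rw [ha, hb]
  inv_mem' := by
    intro a ha
    simp only [Set.mem_setOf_eq, map_inv] at *
    rw [ha]

/-- Any subgroup of a finitely generated commutative group is finitely generated. -/
lemma aux_subgroup_fg {A : Type*} [CommGroup A] (hA : Group.FG A) (B : Subgroup A) :
    Group.FG B := by
  haveI := hA
  haveI : Module.Finite ℤ (Additive A) := Module.Finite.iff_addGroup_fg.mpr inferInstance
  haveI : IsNoetherian ℤ (Additive A) := isNoetherian_of_isNoetherianRing_of_finite ℤ _
  rw [Group.fg_iff_subgroup_fg, Subgroup.fg_iff_add_fg]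
  have h := IsNoetherian.noetherian (AddSubgroup.toIntSubmodule B.toAddSubgroup)
  rwa [Submodule.fg_iff_addSubgroup_fg] at h

/-- If a normal subgroup and the quotient by it are finitely generated, so is the group. -/
lemma aux_fg_of_normal {G : Type*} [Group G] (N : Subgroup G) [N.Normal]
    (hN : Group.FG N) (hQ : Group.FG (G ⧸ N)) : Group.FG G := by
  obtain ⟨S, hS⟩ := (Group.fg_iff_subgroup_fg N).1 hN
  obtain ⟨T, hT, hTfin⟩ := Group.fg_iff.1 hQ
  rw [Group.fg_iff]
  refine ⟨↑S ∪ Quotient.out '' T, ?_, S.finite_toSet.union (hTfin.image _)⟩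
  set C := Subgroup.closure (↑S ∪ Quotient.out '' T) with hC
  have hNC : N ≤ C := hS ▸ Subgroup.closure_mono Set.subset_union_left
  have hmap : Subgroup.map (QuotientGroup.mk' N) C = ⊤ := by
    rw [eq_top_iff, ← hT, Subgroup.closure_le]
    intro t ht
    exact ⟨Quotient.out t,
      Subgroup.subset_closure (Or.inr ⟨t, ht, rfl⟩), QuotientGroup.out_eq' t⟩
  have hcm := Subgroup.comap_map_eq (QuotientGroup.mk' N) C
  rw [hmap, Subgroup.comap_top, QuotientGroup.ker_mk'] at hcm
  rw [hcm, sup_eq_left.mpr hNC]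

/-- A group with a finitely generated subgroup of finite index is finitely generated. -/
lemma aux_fg_of_finiteIndex_fg {G : Type*} [Group G] (K : Subgroup G)
    (hfi : K.FiniteIndex) (h : Group.FG K) : Group.FG G := by
  obtain ⟨S, hS⟩ := (Group.fg_iff_subgroup_fg K).1 h
  haveI := hfi
  haveI : Finite (G ⧸ K) := Subgroup.finite_quotient_of_finiteIndex
  rw [Group.fg_iff]
  refine ⟨↑S ∪ Set.range (Quotient.out : G ⧸ K → G), ?_,
    S.finite_toSet.union (Set.finite_range _)⟩
  rw [eq_top_iff]
  intro g _
  have h1 : (Quotient.out (QuotientGroup.mk g : G ⧸ K))⁻¹ * g ∈ K := by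
    rw [← QuotientGroup.eq, QuotientGroup.out_eq']
  have h2 : Quotient.out (QuotientGroup.mk g : G ⧸ K) ∈
      Subgroup.closure (↑S ∪ Set.range (Quotient.out : G ⧸ K → G)) :=
    Subgroup.subset_closure (Or.inr ⟨_, rfl⟩)
  have h3 : (Quotient.out (QuotientGroup.mk g : G ⧸ K))⁻¹ * g ∈
      Subgroup.closure (↑S ∪ Set.range (Quotient.out : G ⧸ K → G)) :=
    Subgroup.closure_mono Set.subset_union_left (by rwa [hS])
  have := mul_mem h2 h3
  rwa [mul_inv_cancel_left] at this

/-- For `φ(h,a) = (ψ(h), α(h)·a⁻¹)` on `H × A` (so `γ` is the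
inversion), `Fix φ` is finitely generated iff `Fix ψ` is finitely generated. -/
theorem fixed_fg_iff_of_gamma_inversion {H A : Type*} [Group H] [CommGroup A]
    (hHfg : Group.FG H) (hZ : Subgroup.center H = ⊥) (hA : Group.FG A)
    (ψ : H ≃* H) (α : H →* A) (φ : (H × A) ≃* (H × A))
    (hφ : ∀ (h : H) (a : A), φ (h, a) = (ψ h, α h * a⁻¹)) :
    Group.FG ↥(fixedSubgroup φ) ↔ Group.FG ↥(fixedSubgroup ψ) := by
  -- membership characterizations
  have memS : ∀ h : H, h ∈ fixedSubgroup ψ ↔ ψ h = h := fun h => Iff.rfl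
  have memF : ∀ x : H × A, x ∈ fixedSubgroup φ ↔ ψ x.1 = x.1 ∧ x.2 * x.2 = α x.1 := by
    rintro ⟨h, a⟩
    show φ (h, a) = (h, a) ↔ _
    rw [hφ, Prod.ext_iff]
    simp only
    constructor
    · rintro ⟨h1, h2⟩
      refine ⟨h1, ?_⟩
      nth_rewrite 1 [← h2]
      rw [inv_mul_cancel_right]
    · rintro ⟨h1, h2⟩
      refine ⟨h1, ?_⟩
      rw [← h2, mul_inv_cancel_right]
  -- the projection homomorphism
  have hp1 : ∀ x : fixedSubgroup φ, ((x : H × A)).1 ∈ fixedSubgroup ψ :=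
    fun x => ((memF x).1 x.2).1
  set p : ↥(fixedSubgroup φ) →* ↥(fixedSubgroup ψ) :=
    ((MonoidHom.fst H A).comp (fixedSubgroup φ).subtype).codRestrict _ hp1 with hpdef
  have hpval : ∀ x : fixedSubgroup φ, ((p x : ↥(fixedSubgroup ψ)) : H) = (x : H × A).1 :=
    fun x => rfl
  -- kernel of p is finite
  set T2 : Subgroup A := (powMonoidHom 2 : A →* A).ker with hT2
  have hT2fin : Finite T2 := by
    haveI : Group.FG T2 := aux_subgroup_fg hA T2
    refine CommGroup.finite_of_fg_torsion (G := ↥T2) (fun x => ?_)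
    refine isOfFinOrder_iff_pow_eq_one.mpr ⟨2, two_pos, ?_⟩
    ext
    have := x.2
    rw [MonoidHom.mem_ker] at this
    simpa using this
  have hkerfin : Finite p.ker := by
    have hj : ∀ x : p.ker, ((x : ↥(fixedSubgroup φ)) : H × A).2 ∈ T2 := by
      intro x
      have hx1 : ((x : ↥(fixedSubgroup φ)) : H × A).1 = 1 := by
        have := x.2
        rw [MonoidHom.mem_ker] at this
        have := congrArg (fun y : ↥(fixedSubgroup ψ) => (y : H)) this
        simpa [hpval] using this
      have hm := (memF _).1 (x : ↥(fixedSubgroup φ)).2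
      rw [MonoidHom.mem_ker]
      have : ((x : ↥(fixedSubgroup φ)) : H × A).2 * ((x : ↥(fixedSubgroup φ)) : H × A).2 = 1 := by
        rw [hm.2, hx1, map_one]
      simpa [pow_two] using this
    have hinj : Function.Injective
        (fun x : p.ker => (⟨((x : ↥(fixedSubgroup φ)) : H × A).2, hj x⟩ : T2)) := by
      intro x y hxy
      simp only [Subtype.mk.injEq] at hxy
      have hx1 : ((x : ↥(fixedSubgroup φ)) : H × A).1 = 1 := by
        have := x.2; rw [MonoidHom.mem_ker] at this
        have := congrArg (fun y : ↥(fixedSubgroup ψ) => (y : H)) this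
        simpa [hpval] using this
      have hy1 : ((y : ↥(fixedSubgroup φ)) : H × A).1 = 1 := by
        have := y.2; rw [MonoidHom.mem_ker] at this
        have := congrArg (fun y : ↥(fixedSubgroup ψ) => (y : H)) this
        simpa [hpval] using this
      apply Subtype.ext; apply Subtype.ext
      exact Prod.ext (hx1.trans hy1.symm) hxy
    exact Finite.of_injective _ hinj
  -- the squares subgroup and finite index facts
  set Q : Subgroup A := (powMonoidHom 2 : A →* A).range with hQdef
  have hQfi : Q.FiniteIndex := by
    haveI := hA
    haveI : Finite (A ⧸ Q) := by
      refine CommGroup.finite_of_fg_torsion (G := A ⧸ Q) (fun x => ?_)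
      refine isOfFinOrder_iff_pow_eq_one.mpr ⟨2, two_pos, ?_⟩
      induction x using QuotientGroup.induction_on with
      | H a =>
        rw [← QuotientGroup.mk_pow, QuotientGroup.eq_one_iff]
        exact ⟨a, rfl⟩
    exact Q.finiteIndex_of_finite_quotient
  -- the range of p
  have hrange_eq : p.range = (Q.comap α).subgroupOf (fixedSubgroup ψ) := by
    ext y
    rw [Subgroup.mem_subgroupOf, Subgroup.mem_comap]
    constructor
    · rintro ⟨x, rfl⟩
      have hm := (memF _).1 x.2
      rw [hpval]
      exact ⟨(x : H × A).2, by simpa [pow_two] using hm.2⟩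
    · rintro ⟨a, ha⟩
      have hmem : ((y : H), a) ∈ fixedSubgroup φ := by
        rw [memF]
        exact ⟨y.2, by simpa [pow_two] using ha⟩
      exact ⟨⟨_, hmem⟩, by apply Subtype.ext; rfl⟩
  have hfi : p.range.FiniteIndex := by
    rw [hrange_eq]
    constructor
    have h1 : ((Q.comap α).subgroupOf (fixedSubgroup ψ)).index
        = (Q.comap α).relIndex (fixedSubgroup ψ) := rfl
    rw [h1, Subgroup.relIndex_comap]
    intro h0
    exact hQfi.index_ne_zero (Nat.eq_zero_of_zero_dvd
      (h0 ▸ Subgroup.relIndex_dvd_index_of_normal Q _))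
  constructor
  · -- Fix φ fg → Fix ψ fg
    intro hF
    haveI := hF
    have hrfg : Group.FG p.range := Group.fg_of_surjective p.rangeRestrict_surjective
    exact aux_fg_of_finiteIndex_fg p.range hfi hrfg
  · -- Fix ψ fg → Fix φ fg
    intro hS
    haveI := hS
    haveI := hfi
    haveI : Group.FG p.range := Subgroup.fg_of_index_ne_zero _
    have hQfg : Group.FG (↥(fixedSubgroup φ) ⧸ p.ker) :=
      Group.fg_of_surjective (f := (QuotientGroup.quotientKerEquivRange p).symm.toMonoidHom)
        (QuotientGroup.quotientKerEquivRange p).symm.surjective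
    haveI : Finite p.ker := hkerfin
    exact aux_fg_of_normal p.ker Group.fg_of_finite hQfg
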